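/- Let m ≥ 4 and n ≥ 5 with n odd. The radio number of the stacked-book graph G_{m,n} = S_m □ P_n satisfies rn(G_{m,n}) ≥ (mn² + m + 2n − 4)/2. -/

import Mathlib

open SimpleGraph

/-- The star graph on `m` vertices: vertex `0` is the center, adjacent to all others. -/
def starGraph (m : ℕ) : SimpleGraph (Fin m) :=
  SimpleGraph.fromRel (fun a _ => (a : ℕ) = 0)

/-- The stacked-book graph `G_{m,n} = S_m □ P_n`. -/
def stackedBook (m n : ℕ) : SimpleGraph (Fin m × Fin n) :=
  starGraph m □ SimpleGraph.pathGraph n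

/-- A radio labeling of `G`: `|f u - f v| ≥ diam G + 1 - d(u,v)` for all distinct `u, v`. -/
def IsRadioLabeling {V : Type*} (G : SimpleGraph V) (f : V → ℕ) : Prop :=
  ∀ u v : V, u ≠ v → (G.diam : ℤ) + 1 - G.dist u v ≤ |(f u : ℤ) - (f v : ℤ)|

/-- The span of a labeling on a finite vertex set: max label minus min label. -/
noncomputable def labelSpan {V : Type*} [Fintype V] (f : V → ℕ) : ℕ :=
  Finset.univ.sup f - sInf (Set.range f)

/-- The radio number: minimum span over all radio labelings. -/
noncomputable def radioNumber {V : Type*} [Fintype V] (G : SimpleGraph V) : ℕ :=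
  sInf {s | ∃ f : V → ℕ, IsRadioLabeling G f ∧ labelSpan f = s}

namespace Stmt11Aux

def hub {m : ℕ} (a : Fin m) : ℤ := if (a:ℕ) = 0 then 1 else 0

lemma hub_nonneg {m : ℕ} (a : Fin m) : 0 ≤ hub a := by unfold hub; split <;> norm_num

lemma hub_le_one {m : ℕ} (a : Fin m) : hub a ≤ 1 := by unfold hub; split <;> norm_num

lemma starGraph_adj {m : ℕ} {a b : Fin m} :
    (_root_.starGraph m).Adj a b ↔ a ≠ b ∧ ((a:ℕ) = 0 ∨ (b:ℕ) = 0) := by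
  simp [_root_.starGraph, fromRel_adj]

lemma path_walk {n : ℕ} (d : ℕ) : ∀ (i j : Fin n), (i:ℕ) + d = (j:ℕ) →
    ∃ w : (pathGraph n).Walk i j, w.length = d := by
  induction d with
  | zero =>
    intro i j h
    have : i = j := Fin.ext (by omega)
    subst this
    exact ⟨Walk.nil, rfl⟩
  | succ d ih =>
    intro i j h
    have hi1 : (i:ℕ) + 1 < n := by have := j.isLt; omega
    have hadj : (pathGraph n).Adj i ⟨(i:ℕ)+1, hi1⟩ := by
      rw [pathGraph_adj]; left; rfl
    obtain ⟨w, hw⟩ := ih ⟨(i:ℕ)+1, hi1⟩ j (by simp; omega)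
    exact ⟨Walk.cons hadj w, by simp [hw]⟩

lemma path_walk' {n : ℕ} (i j : Fin n) :
    ∃ w : (pathGraph n).Walk i j, (w.length : ℤ) = |((i:ℕ):ℤ) - ((j:ℕ):ℤ)| := by
  rcases le_total (i:ℕ) (j:ℕ) with h | h
  · obtain ⟨w, hw⟩ := path_walk ((j:ℕ) - (i:ℕ)) i j (by omega)
    refine ⟨w, ?_⟩
    rw [hw, abs_sub_comm, abs_of_nonneg (by push_cast; omega)]
    push_cast; omega
  · obtain ⟨w, hw⟩ := path_walk ((i:ℕ) - (j:ℕ)) j i (by omega)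
    refine ⟨w.reverse, ?_⟩
    rw [Walk.length_reverse, hw, abs_of_nonneg (by push_cast; omega)]
    push_cast; omega

lemma star_walk {m : ℕ} (hm : 1 ≤ m) (a b : Fin m) :
    ∃ w : (_root_.starGraph m).Walk a b, (w.length : ℤ) ≤ 2 - hub a - hub b := by
  have hz : (0:ℕ) < m := hm
  by_cases hab : a = b
  · subst hab
    exact ⟨Walk.nil, by have := hub_le_one a; simp; linarith⟩
  · by_cases ha : (a:ℕ) = 0
    · have hb : (b:ℕ) ≠ 0 := fun h => hab (Fin.ext (by omega))
      refine ⟨Walk.cons (starGraph_adj.mpr ⟨hab, Or.inl ha⟩) Walk.nil, ?_⟩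
      simp [hub, ha, hb]
    · by_cases hb : (b:ℕ) = 0
      · refine ⟨Walk.cons (starGraph_adj.mpr ⟨hab, Or.inr hb⟩) Walk.nil, ?_⟩
        simp [hub, ha, hb]
      · have h0a : (⟨0, hz⟩ : Fin m) ≠ a := fun h => ha (by rw [← h])
        have h0b : (⟨0, hz⟩ : Fin m) ≠ b := fun h => hb (by rw [← h])
        refine ⟨Walk.cons (starGraph_adj.mpr ⟨h0a.symm, Or.inr rfl⟩)
          (Walk.cons (starGraph_adj.mpr ⟨h0b, Or.inl rfl⟩) Walk.nil), ?_⟩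
        simp [hub, ha, hb]

lemma prod_walk {m n : ℕ} (hm : 1 ≤ m) (u v : Fin m × Fin n) :
    ∃ w : (stackedBook m n).Walk u v,
      (w.length : ℤ) ≤ |((u.2:ℕ):ℤ) - ((v.2:ℕ):ℤ)| + 2 - hub u.1 - hub v.1 := by
  obtain ⟨a, i⟩ := u
  obtain ⟨b, j⟩ := v
  obtain ⟨ws, hws⟩ := star_walk hm a b
  obtain ⟨wp, hwp⟩ := path_walk' i j
  refine ⟨(ws.boxProdLeft (pathGraph n) i).append (wp.boxProdRight (_root_.starGraph m) b), ?_⟩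
  unfold stackedBook
  rw [Walk.length_append]
  simp only [SimpleGraph.Walk.boxProdLeft, SimpleGraph.Walk.boxProdRight, Walk.length_map]
  erw [Walk.length_map, Walk.length_map]
  push_cast
  linarith [hws, hwp.le, hwp.ge]

lemma lip {V : Type*} {G : SimpleGraph V} (g : V → ℤ)
    (hg : ∀ u v, G.Adj u v → |g u - g v| ≤ 1) :
    ∀ {u v : V} (w : G.Walk u v), |g u - g v| ≤ w.length := by
  intro u v w
  induction w with
  | nil => simp
  | @cons x y z h p ih =>
    have h1 := hg x y h
    have h2 := abs_sub_le (g x) (g y) (g z)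
    rw [Walk.length_cons]
    push_cast
    linarith

lemma dist_ub {m n : ℕ} (hm : 1 ≤ m) (u v : Fin m × Fin n) :
    ((stackedBook m n).dist u v : ℤ) ≤ |((u.2:ℕ):ℤ) - ((v.2:ℕ):ℤ)| + 2 - hub u.1 - hub v.1 := by
  obtain ⟨w, hw⟩ := prod_walk hm u v
  exact le_trans (by exact_mod_cast SimpleGraph.dist_le w) hw

lemma diam_eq {m n : ℕ} (hm : 4 ≤ m) (hn : 2 ≤ n) : (stackedBook m n).diam = n + 1 := by
  have hm1 : 1 ≤ m := by omega
  -- upper bound on ediam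
  have hup : (stackedBook m n).ediam ≤ ((n + 1 : ℕ) : ℕ∞) := by
    apply ediam_le_of_edist_le
    intro u v
    obtain ⟨w, hw⟩ := prod_walk hm1 u v
    refine le_trans (SimpleGraph.Walk.edist_le w) ?_
    have h2 : |((u.2:ℕ):ℤ) - ((v.2:ℕ):ℤ)| ≤ (n:ℤ) - 1 := by
      rw [abs_le]
      refine ⟨?_, ?_⟩ <;> · have := u.2.isLt; have := v.2.isLt; push_cast; omega
    have h3 := hub_nonneg u.1
    have h4 := hub_nonneg v.1
    have h1 : w.length ≤ n + 1 := by
      have : (w.length : ℤ) ≤ (n:ℤ) + 1 := by linarith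
      exact_mod_cast this
    exact_mod_cast h1
  have hne : (stackedBook m n).ediam ≠ ⊤ := by
    intro h
    rw [h] at hup
    exact (ENat.coe_ne_top (n+1)) (le_antisymm le_top hup)
  -- diam ≤ n+1
  have hd1 : (stackedBook m n).diam ≤ n + 1 := by
    have := ENat.toNat_le_toNat hup (ENat.coe_ne_top (n+1))
    rw [ENat.toNat_coe] at this
    simpa [SimpleGraph.diam] using this
  -- witness pair
  have h1m : (1:ℕ) < m := by omega
  have h2m : (2:ℕ) < m := by omega
  have h0n : (0:ℕ) < n := by omega
  have hn1 : n - 1 < n := by omega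
  set u0 : Fin m × Fin n := (⟨1, h1m⟩, ⟨0, h0n⟩) with hu0
  set v0 : Fin m × Fin n := (⟨2, h2m⟩, ⟨n-1, hn1⟩) with hv0
  set g : Fin m × Fin n → ℤ :=
    fun p => ((p.2:ℕ):ℤ) + (if (p.1:ℕ) = 2 then 2 else if (p.1:ℕ) = 0 then 1 else 0) with hg
  have hlip : ∀ x y, (stackedBook m n).Adj x y → |g x - g y| ≤ 1 := by
    rintro ⟨a, i⟩ ⟨b, j⟩ hadj
    rcases hadj with ⟨hs, hcol⟩ | ⟨hp, hrow⟩
    all_goals dsimp only at *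
    · -- star edge, same column
      rw [starGraph_adj] at hs
      have hcol' : (i:ℕ) = (j:ℕ) := congrArg Fin.val hcol
      have hne' : (a:ℕ) ≠ (b:ℕ) := fun h => hs.1 (Fin.ext h)
      have h0 : (a:ℕ) = 0 ∨ (b:ℕ) = 0 := hs.2
      simp only [hg]
      rw [abs_le]
      constructor <;> (split_ifs <;> push_cast <;> omega)
    · -- path edge, same row
      rw [pathGraph_adj] at hp
      have hrow' : (a:ℕ) = (b:ℕ) := congrArg Fin.val hrow
      simp only [hg]
      rw [abs_le]
      constructor <;> (split_ifs <;> push_cast <;> omega)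
  have hreach : (stackedBook m n).Reachable u0 v0 := by
    obtain ⟨w, _⟩ := prod_walk hm1 u0 v0
    exact ⟨w⟩
  obtain ⟨w, hwlen⟩ := hreach.exists_walk_length_eq_dist
  have hlow : (n:ℤ) + 1 ≤ ((stackedBook m n).dist u0 v0 : ℤ) := by
    have hl := lip g hlip w
    rw [hwlen] at hl
    have hgu : g u0 = 0 := by norm_num [hg, hu0]
    have hgv : g v0 = (n:ℤ) + 1 := by
      norm_num [hg, hv0]
      push_cast
      omega
    rw [hgu, hgv, zero_sub, abs_neg, abs_of_nonneg (by positivity)] at hl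
    exact hl
  have hd2 : n + 1 ≤ (stackedBook m n).diam := by
    have hdd := SimpleGraph.dist_le_diam hne (u := u0) (v := v0)
    have h' : n + 1 ≤ (stackedBook m n).dist u0 v0 := by exact_mod_cast hlow
    omega
  omega

lemma sum_abs (k : ℕ) : ∑ j ∈ Finset.range (2*k+1), |(j:ℤ) - k| = k^2 + k := by
  induction k with
  | zero => simp
  | succ k ih =>
    have h1 : 2*(k+1)+1 = (2*k+1) + 1 + 1 := by ring
    rw [h1, Finset.sum_range_succ, Finset.sum_range_succ']
    have h2 : ∀ j : ℕ, |((j+1:ℕ):ℤ) - ((k+1:ℕ):ℤ)| = |(j:ℤ) - (k:ℤ)| := by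
      intro j; congr 1; push_cast; ring
    simp only [h2, ih]
    have h3 : |((0:ℕ):ℤ) - ((k+1:ℕ):ℤ)| = (k:ℤ)+1 := by
      rw [abs_sub_comm, abs_of_nonneg (by push_cast; omega)]; push_cast; ring
    have h4 : |((2*k+1+1:ℕ):ℤ) - ((k+1:ℕ):ℤ)| = (k:ℤ)+1 := by
      rw [abs_of_nonneg (by push_cast; omega)]; push_cast; ring
    have h5 : |2*(k:ℤ)+1-(k:ℤ)| = (k:ℤ)+1 := by rw [abs_of_nonneg (by omega)]; ring
    push_cast at h3 h4 h5 ⊢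
    rw [h5]
    ring_nf
    rw [show |(-1:ℤ) - (k:ℤ)| = (k:ℤ)+1 from by rw [abs_of_nonpos (by omega)]; ring]
    ring

lemma sumL (m n k : ℕ) (h : n = 2*k+1) :
    ∑ u : Fin m × Fin n, |((u.2:ℕ):ℤ) - (k:ℤ)| = m*(k^2 + k) := by
  rw [Fintype.sum_prod_type]
  have hin : ∑ j : Fin n, |((j:ℕ):ℤ) - (k:ℤ)| = (k:ℤ)^2 + k := by
    rw [Fin.sum_univ_eq_sum_range (fun j => |((j:ℕ):ℤ) - (k:ℤ)|) n]
    subst h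
    exact_mod_cast sum_abs k
  simp only [hin]
  rw [Finset.sum_const, Finset.card_univ, Fintype.card_fin, nsmul_eq_mul]

lemma sumH (m n : ℕ) (hm : 1 ≤ m) :
    ∑ u : Fin m × Fin n, hub u.1 = (n:ℤ) := by
  rw [Fintype.sum_prod_type]
  have hz : (0:ℕ) < m := hm
  have key : ∀ a : Fin m, ∑ _j : Fin n, hub a = (n:ℤ) * hub a := by
    intro a; rw [Finset.sum_const, Finset.card_univ, Fintype.card_fin]; push_cast; ring
  simp only [key]
  have : ∀ a : Fin m, ((a:ℕ) = 0) = (a = ⟨0, hz⟩) := by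
    intro a
    apply propext
    exact ⟨fun h => Fin.ext h, fun h => by subst h; rfl⟩
  unfold hub
  simp only [this]
  simp only [mul_ite, mul_one, mul_zero]
  rw [Finset.sum_ite_eq' Finset.univ (⟨0, hz⟩ : Fin m) (fun _ => (n:ℤ))]
  simp only [Finset.mem_univ, if_true]

lemma abs_col_le {m n : ℕ} (u v : Fin m × Fin n) (hn : 1 ≤ n) :
    |((u.2:ℕ):ℤ) - ((v.2:ℕ):ℤ)| ≤ (n:ℤ) - 1 := by
  rw [abs_le]
  refine ⟨?_, ?_⟩ <;> · have := u.2.isLt; have := v.2.isLt; omega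

end Stmt11Aux

open Stmt11Aux in
/-- lower bound `rn(G_{m,n}) ≥ (mn² + m + 2n - 4)/2` for `m ≥ 4`, odd `n ≥ 5`. -/
theorem stmt11 (m n : ℕ) (hm : 4 ≤ m) (hn : 5 ≤ n) (ho : Odd n) :
    (m * n ^ 2 + m + 2 * n - 4) / 2 ≤ radioNumber (stackedBook m n) := by
  obtain ⟨k, hk⟩ := ho
  have hk2 : 2 ≤ k := by omega
  have hm1 : (1:ℕ) ≤ m := by omega
  have hn1 : (1:ℕ) ≤ n := by omega
  have hdiam : (stackedBook m n).diam = n + 1 := diam_eq hm (by omega)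
  have hNpos : 0 < m * n := by positivity
  have hN20 : 20 ≤ m * n := Nat.mul_le_mul hm hn
  -- the set of spans is nonempty
  have hnonempty : {s | ∃ f : Fin m × Fin n → ℕ, IsRadioLabeling (stackedBook m n) f ∧
      labelSpan f = s}.Nonempty := by
    set ef := Fintype.equivFin (Fin m × Fin n) with hef
    refine ⟨labelSpan (fun u => (n+2) * (ef u : ℕ)), fun u => (n+2) * (ef u : ℕ), ?_, rfl⟩
    intro u v huv
    rw [hdiam]
    have hij : (ef u : ℕ) ≠ (ef v : ℕ) := fun h => huv (ef.injective (Fin.ext h))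
    have h1 : (1:ℤ) ≤ |((ef u : ℕ):ℤ) - ((ef v : ℕ):ℤ)| := by
      rcases lt_or_gt_of_ne hij with h | h
      · rw [abs_sub_comm, abs_of_nonneg (by push_cast; omega)]; push_cast; omega
      · rw [abs_of_nonneg (by push_cast; omega)]; push_cast; omega
    have h2 : |((n+2) * (ef u : ℕ) : ℤ) - ((n+2) * (ef v : ℕ) : ℤ)|
        = ((n:ℤ)+2) * |((ef u : ℕ):ℤ) - ((ef v : ℕ):ℤ)| := by
      push_cast
      rw [← mul_sub, abs_mul, abs_of_nonneg (by positivity)]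
    have h3 : (0:ℤ) ≤ ((stackedBook m n).dist u v : ℤ) := by positivity
    push_cast
    push_cast at h2
    rw [h2]
    nlinarith
  apply le_csInf hnonempty
  rintro s ⟨f, hf, rfl⟩
  -- order vertices by label
  have hcard : Fintype.card (Fin m × Fin n) = m * n := by simp
  set e0 : Fin (m*n) ≃ (Fin m × Fin n) := (Fintype.equivFinOfCardEq hcard).symm with he0
  set σp := Tuple.sort (fun i => f (e0 i)) with hσp
  set σe : Fin (m*n) ≃ (Fin m × Fin n) := σp.trans e0 with hσe
  have hmono : Monotone (fun i : Fin (m*n) => f (σe i)) :=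
    Tuple.monotone_sort (fun i => f (e0 i))
  -- f is injective
  have hfinj : Function.Injective f := by
    intro u v huv
    by_contra hne
    have h1 := hf u v hne
    rw [hdiam, huv] at h1
    simp only [sub_self, abs_zero] at h1
    have h2 := dist_ub hm1 u v
    have h3 := abs_col_le u v hn1
    have h4 := hub_nonneg u.1
    have h5 := hub_nonneg v.1
    push_cast at h1
    linarith
  have hstrict : StrictMono (fun i : Fin (m*n) => f (σe i)) :=
    hmono.strictMono_of_injective (hfinj.comp σe.injective)
  set N1 := m * n - 1 with hN1
  have hN1succ : N1 + 1 = m * n := by omega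
  set Fv : ℕ → Fin m × Fin n := fun i => σe ⟨min i N1, by omega⟩ with hFvdef
  have hFv : ∀ (i : ℕ) (h : i ≤ N1), Fv i = σe ⟨i, by omega⟩ := by
    intro i h
    rw [hFvdef]
    exact congrArg σe (Fin.ext (by simp [min_eq_left h]))
  -- min and max labels
  have hFvmax : ∀ u, f u ≤ f (Fv N1) := by
    intro u
    obtain ⟨i, rfl⟩ := σe.surjective u
    rw [hFv N1 le_rfl]
    exact hmono (by rw [Fin.le_def]; exact (by omega : (i:ℕ) ≤ N1))
  have hFvmin : ∀ u, f (Fv 0) ≤ f u := by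
    intro u
    obtain ⟨i, rfl⟩ := σe.surjective u
    rw [hFv 0 (by omega)]
    exact hmono (by rw [Fin.le_def]; exact (by omega : (0:ℕ) ≤ (i:ℕ)))
  have hsup : Finset.univ.sup f = f (Fv N1) :=
    le_antisymm (Finset.sup_le fun u _ => hFvmax u) (Finset.le_sup (Finset.mem_univ _))
  have hinf : sInf (Set.range f) = f (Fv 0) :=
    le_antisymm (Nat.sInf_le ⟨Fv 0, rfl⟩)
      (le_csInf ⟨f (Fv 0), ⟨Fv 0, rfl⟩⟩ (by rintro y ⟨u, rfl⟩; exact hFvmin u))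
  -- gap bound for consecutive vertices
  have hgap : ∀ i, i < N1 → ((n:ℤ) + 2) - ((stackedBook m n).dist (Fv i) (Fv (i+1)) : ℤ)
      ≤ (f (Fv (i+1)) : ℤ) - (f (Fv i) : ℤ) := by
    intro i hi
    have hlt : f (Fv i) < f (Fv (i+1)) := by
      rw [hFv i (by omega), hFv (i+1) (by omega)]
      exact hstrict (by rw [Fin.lt_def]; exact (by omega : (i:ℕ) < i+1))
    have hne : Fv i ≠ Fv (i+1) := fun h => by rw [h] at hlt; exact lt_irrefl _ hlt
    have h1 := hf _ _ hne
    rw [hdiam] at h1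
    rw [abs_sub_comm, abs_of_nonneg (by push_cast; omega)] at h1
    push_cast at h1 ⊢
    linarith
  -- pointwise distance bound
  set LN : ℕ → ℤ := fun i => |(((Fv i).2:ℕ):ℤ) - (k:ℤ)| with hLN
  set hubN : ℕ → ℤ := fun i => hub (Fv i).1 with hhubN
  have hpoint : ∀ i ∈ Finset.range N1,
      (n:ℤ) - LN i - LN (i+1) + hubN i + hubN (i+1)
        ≤ (f (Fv (i+1)) : ℤ) - (f (Fv i) : ℤ) := by
    intro i hi
    rw [Finset.mem_range] at hi
    have h1 := hgap i hi
    have h2 := dist_ub hm1 (Fv i) (Fv (i+1))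
    have h3 : |(((Fv i).2:ℕ):ℤ) - (((Fv (i+1)).2:ℕ):ℤ)| ≤ LN i + LN (i+1) := by
      rw [hLN]
      calc |(((Fv i).2:ℕ):ℤ) - (((Fv (i+1)).2:ℕ):ℤ)|
          ≤ |(((Fv i).2:ℕ):ℤ) - (k:ℤ)| + |(k:ℤ) - (((Fv (i+1)).2:ℕ):ℤ)| :=
            abs_sub_le _ _ _
        _ = |(((Fv i).2:ℕ):ℤ) - (k:ℤ)| + |(((Fv (i+1)).2:ℕ):ℤ) - (k:ℤ)| := by
            rw [abs_sub_comm (k:ℤ)]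
    rw [hhubN]
    linarith
  -- telescoping
  have htele : ∑ i ∈ Finset.range N1, ((f (Fv (i+1)) : ℤ) - (f (Fv i) : ℤ))
      = (f (Fv N1) : ℤ) - (f (Fv 0) : ℤ) :=
    Finset.sum_range_sub (fun i => (f (Fv i) : ℤ)) N1
  have hsumle := Finset.sum_le_sum hpoint
  rw [htele] at hsumle
  -- split the lower-bound sum
  have hsplit : ∑ i ∈ Finset.range N1,
      ((n:ℤ) - LN i - LN (i+1) + hubN i + hubN (i+1))
      = (N1:ℤ) * n - (∑ i ∈ Finset.range N1, LN i) - (∑ i ∈ Finset.range N1, LN (i+1))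
        + (∑ i ∈ Finset.range N1, hubN i) + (∑ i ∈ Finset.range N1, hubN (i+1)) := by
    rw [Finset.sum_add_distrib, Finset.sum_add_distrib, Finset.sum_sub_distrib,
      Finset.sum_sub_distrib, Finset.sum_const, Finset.card_range]
    push_cast
    ring
  -- total sums over all vertices
  have hAeq : ∑ i ∈ Finset.range (N1+1), LN i = (m:ℤ) * (k^2 + k) := by
    rw [hN1succ]
    rw [Finset.sum_range (fun i => LN i)]  -- to Fin sum
    have : ∀ i : Fin (m*n), LN (i:ℕ) = |(((σe i).2:ℕ):ℤ) - (k:ℤ)| := by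
      intro i
      have h : Fv (i:ℕ) = σe i := by
        rw [hFv (i:ℕ) (by omega)]
      simp only [hLN, h]
    rw [Finset.sum_congr rfl (fun i _ => this i)]
    rw [Equiv.sum_comp σe (fun u => |((u.2:ℕ):ℤ) - (k:ℤ)|)]
    exact_mod_cast sumL m n k hk
  have hHeq : ∑ i ∈ Finset.range (N1+1), hubN i = (n:ℤ) := by
    rw [hN1succ]
    rw [Finset.sum_range (fun i => hubN i)]
    have : ∀ i : Fin (m*n), hubN (i:ℕ) = hub (σe i).1 := by
      intro i
      have h : Fv (i:ℕ) = σe i := by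
        rw [hFv (i:ℕ) (by omega)]
      simp only [hhubN, h]
    rw [Finset.sum_congr rfl (fun i _ => this i)]
    rw [Equiv.sum_comp σe (fun u => hub u.1)]
    exact sumH m n hm1
  have e1 : ∑ i ∈ Finset.range (N1+1), LN i = ∑ i ∈ Finset.range N1, LN i + LN N1 :=
    Finset.sum_range_succ LN N1
  have e2 : ∑ i ∈ Finset.range (N1+1), LN i = ∑ i ∈ Finset.range N1, LN (i+1) + LN 0 :=
    Finset.sum_range_succ' LN N1
  have e3 : ∑ i ∈ Finset.range (N1+1), hubN i = ∑ i ∈ Finset.range N1, hubN i + hubN N1 :=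
    Finset.sum_range_succ hubN N1
  have e4 : ∑ i ∈ Finset.range (N1+1), hubN i = ∑ i ∈ Finset.range N1, hubN (i+1) + hubN 0 :=
    Finset.sum_range_succ' hubN N1
  have hLN0 : 0 ≤ LN 0 := abs_nonneg _
  have hLNN1 : 0 ≤ LN N1 := abs_nonneg _
  have hhub0 : hubN 0 ≤ 1 := hub_le_one _
  have hhubN1 : hubN N1 ≤ 1 := hub_le_one _
  -- main integer inequality
  have hmain : (N1:ℤ) * n - 2 * ((m:ℤ) * (k^2 + k)) + 2 * (n:ℤ) - 2
      ≤ (f (Fv N1) : ℤ) - (f (Fv 0) : ℤ) := by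
    rw [hsplit] at hsumle
    linarith [hsumle, hAeq, hHeq, e1, e2, e3, e4]
  -- numeric identity
  have hT : (m * n ^ 2 + m + 2 * n - 4) / 2 = 2*(m*k^2) + 2*(m*k) + m + 2*k - 1 := by
    have hn2 : m * n^2 = 4*(m*k^2) + 4*(m*k) + m := by subst hk; ring
    set a := m*k^2 with ha
    set b := m*k with hb
    set c := m*n^2 with hc
    omega
  have hTZ : (((m * n ^ 2 + m + 2 * n - 4) / 2 : ℕ) : ℤ)
      = (N1:ℤ) * n - 2 * ((m:ℤ) * (k^2 + k)) + 2 * (n:ℤ) - 2 := by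
    rw [hT]
    have hle : 1 ≤ 2*(m*k^2) + 2*(m*k) + m + 2*k := by
      have h1 : 1 ≤ 2*k := by omega
      calc 1 ≤ 2*k := h1
        _ ≤ 2*(m*k^2) + 2*(m*k) + m + 2*k := Nat.le_add_left _ _
    rw [Nat.cast_sub hle]
    have hN1c : (N1:ℤ) = (m:ℤ) * n - 1 := by
      rw [hN1]
      push_cast [Nat.cast_sub (by omega : 1 ≤ m*n)]
      ring
    rw [hN1c]
    subst hk
    push_cast
    ring
  -- conclude
  unfold labelSpan
  rw [hsup, hinf]
  have hminmax : f (Fv 0) ≤ f (Fv N1) := hFvmin _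
  have : (((m * n ^ 2 + m + 2 * n - 4) / 2 : ℕ) : ℤ) ≤ (f (Fv N1) : ℤ) - (f (Fv 0) : ℤ) := by
    rw [hTZ]; exact hmain
  omega
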